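/- Radon curves, suitably parametrized, are projectively self-dual: let ω(u,v) := u₁v₂ − u₂v₁ be the standard area form on ℝ², let u : ℝ → ℝ² be C¹, and let c > 0. Assume that for all t, ω(u(t), u'(t + c)) = 0 and ω(u'(t), u(t + c)) = 0, and that ω(u(t₀), u(t₀ + c)) = 1 for some t₀. Then ω(u(t), u(t + c)) = 1 for all t, and the lifted curve Γ(t) := (u(t), 1) ∈ ℝ³ is projectively self-dual: the linear equivalence f : ℝ³ → (ℝ³)* given by f(x)(y) = (x₁y₂ − x₂y₁) − x₃y₃ satisfies f(Γ(t))(Γ(t + c)) = 0 and f(Γ(t))(Γ'(t + c)) = 0 for every t. -/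

import Mathlib

noncomputable def Fmap : (Fin 3 → ℝ) →ₗ[ℝ] Module.Dual ℝ (Fin 3 → ℝ) :=
  LinearMap.mk₂ ℝ (fun x y => (x 0 * y 1 - x 1 * y 0) - x 2 * y 2)
    (fun _ _ _ => by simp only [Pi.add_apply]; ring)
    (fun _ _ _ => by simp only [Pi.smul_apply, smul_eq_mul]; ring)
    (fun _ _ _ => by simp only [Pi.add_apply]; ring)
    (fun _ _ _ => by simp only [Pi.smul_apply, smul_eq_mul]; ring)

noncomputable def Gmap : Module.Dual ℝ (Fin 3 → ℝ) →ₗ[ℝ] (Fin 3 → ℝ) where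
  toFun φ := ![φ (fun j => if (1:Fin 3) = j then 1 else 0),
               -φ (fun j => if (0:Fin 3) = j then 1 else 0),
               -φ (fun j => if (2:Fin 3) = j then 1 else 0)]
  map_add' φ ψ := by
    funext i; fin_cases i <;> simp <;> ring
  map_smul' r φ := by
    funext i; fin_cases i <;> simp [mul_comm]

noncomputable def fequiv : (Fin 3 → ℝ) ≃ₗ[ℝ] Module.Dual ℝ (Fin 3 → ℝ) :=
  LinearEquiv.ofLinear Fmap Gmap
    (LinearMap.ext fun φ => LinearMap.ext fun y => by
      simp only [LinearMap.comp_apply, LinearMap.id_apply]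
      conv_rhs => rw [LinearMap.pi_apply_eq_sum_univ φ y, Fin.sum_univ_three]
      simp [Fmap, Gmap, LinearMap.mk₂_apply]
      ring)
    (LinearMap.ext fun x => by
      funext i
      fin_cases i <;> simp [Fmap, Gmap])

/-- Radon curves are projectively self-dual: if `ω(u(t), u'(t+c)) = 0 = ω(u'(t), u(t+c))`
and `ω(u(t₀), u(t₀+c)) = 1` for some `t₀`, then `ω(u(t), u(t+c)) = 1` for all `t` and the
lift `Γ(t) = (u(t), 1)` is self-dual via `f(x)(y) = (x₁y₂ − x₂y₁) − x₃y₃`. -/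
theorem stmt_17 (u : ℝ → Fin 2 → ℝ) (hu : ContDiff ℝ 1 u) (c : ℝ) (hc : 0 < c)
    (h1 : ∀ t : ℝ, u t 0 * deriv u (t + c) 1 - u t 1 * deriv u (t + c) 0 = 0)
    (h2 : ∀ t : ℝ, deriv u t 0 * u (t + c) 1 - deriv u t 1 * u (t + c) 0 = 0)
    (t₀ : ℝ) (h3 : u t₀ 0 * u (t₀ + c) 1 - u t₀ 1 * u (t₀ + c) 0 = 1)
    (Γ : ℝ → Fin 3 → ℝ) (hΓ : ∀ t : ℝ, Γ t = ![u t 0, u t 1, 1]) :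
    (∀ t : ℝ, u t 0 * u (t + c) 1 - u t 1 * u (t + c) 0 = 1) ∧
    ∃ f : (Fin 3 → ℝ) ≃ₗ[ℝ] Module.Dual ℝ (Fin 3 → ℝ),
      (∀ x y : Fin 3 → ℝ, f x y = (x 0 * y 1 - x 1 * y 0) - x 2 * y 2) ∧
      ∀ t : ℝ, f (Γ t) (Γ (t + c)) = 0 ∧ f (Γ t) (deriv Γ (t + c)) = 0 := by
  have hud : Differentiable ℝ u := hu.differentiable one_ne_zero
  have hD : ∀ t, HasDerivAt u (deriv u t) t := fun t => (hud t).hasDerivAt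
  have hDi : ∀ (t : ℝ) (i : Fin 2), HasDerivAt (fun s => u s i) (deriv u t i) t :=
    fun t i => hasDerivAt_pi.1 (hD t) i
  have hDci : ∀ (t : ℝ) (i : Fin 2),
      HasDerivAt (fun s => u (s + c) i) (deriv u (t + c) i) t := by
    intro t i
    have := (hDi (t + c) i).comp t ((hasDerivAt_id t).add_const c)
    simpa [Function.comp_def] using this
  -- part 1
  have key : ∀ t : ℝ, u t 0 * u (t + c) 1 - u t 1 * u (t + c) 0 = 1 := by
    set g : ℝ → ℝ := fun t => u t 0 * u (t + c) 1 - u t 1 * u (t + c) 0 with hg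
    have hgd : ∀ t, HasDerivAt g 0 t := by
      intro t
      have h := (((hDi t 0).mul (hDci t 1)).sub ((hDi t 1).mul (hDci t 0)))
      have e : deriv u t 0 * u (t + c) 1 + u t 0 * deriv u (t + c) 1 -
          (deriv u t 1 * u (t + c) 0 + u t 1 * deriv u (t + c) 0) = 0 := by
        have := h1 t; have := h2 t; linarith
      rw [e] at h; exact h
    have hconst : ∀ s t : ℝ, g s = g t :=
      is_const_of_deriv_eq_zero (fun t => (hgd t).differentiableAt)
        (fun t => (hgd t).deriv)
    intro t
    calc g t = g t₀ := hconst t t₀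
    _ = 1 := h3
  refine ⟨key, fequiv, fun x y => rfl, fun t => ?_⟩
  have hΓd : ∀ s : ℝ, HasDerivAt Γ ![deriv u s 0, deriv u s 1, 0] s := by
    intro s
    rw [hasDerivAt_pi]
    intro i
    fin_cases i
    · simpa [hΓ] using (hDi s 0).congr_of_eventuallyEq
        (Filter.Eventually.of_forall fun r => by simp [hΓ r])
    · simpa [hΓ] using (hDi s 1).congr_of_eventuallyEq
        (Filter.Eventually.of_forall fun r => by simp [hΓ r])
    · simpa [hΓ] using (hasDerivAt_const s (1:ℝ)).congr_of_eventuallyEq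
        (Filter.Eventually.of_forall fun r => by simp [hΓ r])
  have hdΓ : deriv Γ (t + c) = ![deriv u (t + c) 0, deriv u (t + c) 1, 0] :=
    (hΓd (t + c)).deriv
  have happ : ∀ x y : Fin 3 → ℝ, fequiv x y = (x 0 * y 1 - x 1 * y 0) - x 2 * y 2 :=
    fun x y => rfl
  constructor
  · rw [happ, hΓ t, hΓ (t + c)]
    simp [key t]
  · rw [happ, hΓ t, hdΓ]
    simp [h1 t]
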